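/- Let F : ℝᵈ ⇉ ℝˢ be a set-valued mapping whose graph is locally closed at (x̄, ȳ) ∈ gph F. If DF(x̄, ȳ)(0) = {0}, then F has the isolated calmness property at (x̄, ȳ). -/

import Mathlib

open Filter Topology Set
noncomputable section

/-- Contingent (Bouligand tangent) cone. -/
def contingentCone {E : Type*} [NormedAddCommGroup E] [NormedSpace ℝ E]
    (Ω : Set E) (z : E) : Set E :=
  {d | ∃ (t : ℕ → ℝ) (w : ℕ → E), (∀ n, 0 < t n) ∧
    Tendsto t atTop (nhds 0) ∧ Tendsto w atTop (nhds d) ∧ ∀ n, z + t n • w n ∈ Ω}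

/-- Graph of a set-valued mapping. -/
def gph {E F : Type*} (Φ : E → Set F) : Set (E × F) := {p | p.2 ∈ Φ p.1}

/-- Isolated calmness of `F` at `(xb, yb) ∈ gph F`. -/
def IsolatedCalm {E F : Type*} [NormedAddCommGroup E] [NormedAddCommGroup F]
    (Φ : E → Set F) (xb : E) (yb : F) : Prop :=
  ∃ U ∈ nhds xb, ∃ V ∈ nhds yb, ∃ ℓ : ℝ, 0 < ℓ ∧
    ∀ x ∈ U, ∀ y ∈ Φ x, y ∈ V → ‖y - yb‖ ≤ ℓ * ‖x - xb‖

/-- if `gph F` is locally closed at `(xb, yb)` and `DF(xb, yb)(0) = {0}`,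
then `F` has the isolated calmness property at `(xb, yb)`. -/
theorem graphDer_zero_implies_isolatedCalm {d s : ℕ}
    (Φ : EuclideanSpace ℝ (Fin d) → Set (EuclideanSpace ℝ (Fin s)))
    (xb : EuclideanSpace ℝ (Fin d)) (yb : EuclideanSpace ℝ (Fin s)) (hxy : yb ∈ Φ xb)
    (hloc : ∃ ε : ℝ, 0 < ε ∧ IsClosed (gph Φ ∩ Metric.closedBall (xb, yb) ε))
    (hder : {v | ((0 : EuclideanSpace ℝ (Fin d)), v) ∈ contingentCone (gph Φ) (xb, yb)} = {0}) :
    IsolatedCalm Φ xb yb := by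
  by_contra h
  -- Extract contradiction sequences
  have key : ∀ n : ℕ, ∃ p : EuclideanSpace ℝ (Fin d) × EuclideanSpace ℝ (Fin s),
      p.2 ∈ Φ p.1 ∧ ‖p.1 - xb‖ < 1 / (n + 1) ∧ ‖p.2 - yb‖ < 1 / (n + 1) ∧
      (n + 1 : ℝ) * ‖p.1 - xb‖ < ‖p.2 - yb‖ := by
    intro n
    by_contra hc
    push_neg at hc
    apply h
    have hpos : (0 : ℝ) < 1 / (n + 1) := by positivity
    refine ⟨Metric.ball xb (1 / (n + 1)), Metric.ball_mem_nhds _ hpos,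
      Metric.ball yb (1 / (n + 1)), Metric.ball_mem_nhds _ hpos,
      (n + 1 : ℝ), by positivity, ?_⟩
    intro x hx y hy hyV
    have hx' : ‖x - xb‖ < 1 / (n + 1) := by
      rwa [Metric.mem_ball, dist_eq_norm] at hx
    have hy' : ‖y - yb‖ < 1 / (n + 1) := by
      rwa [Metric.mem_ball, dist_eq_norm] at hyV
    exact hc (x, y) hy hx' hy'
  choose p hmem hx hy hlt using key
  set t : ℕ → ℝ := fun n => ‖(p n).2 - yb‖ with ht
  have htpos : ∀ n, 0 < t n := fun n =>
    lt_of_le_of_lt (by positivity) (hlt n)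
  have htne : ∀ n, t n ≠ 0 := fun n => (htpos n).ne'
  -- second components of normalized sequence lie on the unit sphere
  have hvmem : ∀ n, (t n)⁻¹ • ((p n).2 - yb) ∈ Metric.sphere (0 : EuclideanSpace ℝ (Fin s)) 1 := by
    intro n
    simp only [Metric.mem_sphere, dist_zero_right, norm_smul, norm_inv, Real.norm_eq_abs,
      abs_of_pos (htpos n)]
    field_simp [htne n]
    rfl
  obtain ⟨v, hv, φ, hφ, hvtend⟩ :=
    (isCompact_sphere (0 : EuclideanSpace ℝ (Fin s)) 1).tendsto_subseq hvmem
  have hφat : Tendsto φ atTop atTop := hφ.tendsto_atTop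
  -- t ∘ φ → 0
  have htz : Tendsto t atTop (nhds 0) := by
    apply squeeze_zero (fun n => (htpos n).le) (fun n => (hy n).le)
    exact tendsto_one_div_add_atTop_nhds_zero_nat
  have htz' : Tendsto (t ∘ φ) atTop (nhds 0) := htz.comp hφat
  -- first components → 0
  have hutend : Tendsto (fun n => (t n)⁻¹ • ((p n).1 - xb)) atTop
      (nhds (0 : EuclideanSpace ℝ (Fin d))) := by
    refine squeeze_zero_norm (a := fun n : ℕ => 1 / (n + 1)) (fun n => ?_)
      tendsto_one_div_add_atTop_nhds_zero_nat
    rw [norm_smul, norm_inv, Real.norm_eq_abs, abs_of_pos (htpos n)]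
    rw [inv_mul_le_iff₀ (htpos n)]
    have h1 : ‖(p n).1 - xb‖ ≤ (1 / (n + 1)) * ((n + 1 : ℝ) * ‖(p n).1 - xb‖) := by
      rw [← mul_assoc]
      have : (1 / (n + 1 : ℝ)) * (n + 1) = 1 := by
        field_simp
      rw [this, one_mul]
    calc ‖(p n).1 - xb‖ ≤ (1 / (n + 1)) * ((n + 1 : ℝ) * ‖(p n).1 - xb‖) := h1
      _ ≤ 1 / (n + 1) * t n := by
        apply mul_le_mul_of_nonneg_left (hlt n).le (by positivity)
      _ = t n * (1 / (n + 1)) := mul_comm _ _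
  -- assemble the tangent direction
  have hmem0 : (0, v) ∈ contingentCone (gph Φ) (xb, yb) := by
    refine ⟨t ∘ φ, fun n => (t (φ n))⁻¹ • ((p (φ n)).1 - xb, (p (φ n)).2 - yb),
      fun n => htpos (φ n), htz', ?_, ?_⟩
    · rw [Prod.tendsto_iff]
      constructor
      · exact hutend.comp hφat
      · exact hvtend
    · intro n
      have : (xb, yb) + (t ∘ φ) n • (t (φ n))⁻¹ • ((p (φ n)).1 - xb, (p (φ n)).2 - yb)
          = p (φ n) := by
        simp only [Function.comp_apply]
        rw [smul_inv_smul₀ (htne (φ n))]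
        ext <;> simp
      rw [this]
      exact hmem (φ n)
  have hv0 : v = 0 := by
    have : v ∈ {v | ((0 : EuclideanSpace ℝ (Fin d)), v) ∈ contingentCone (gph Φ) (xb, yb)} :=
      hmem0
    rw [hder] at this
    exact this
  rw [hv0] at hv
  simp at hv
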